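/- Σ_{a < N} φ(a)/a² = (1/ζ(2))·(log N + γ − ζ'(2)/ζ(2)) + O((log N)/N) as N → ∞. -/

import Mathlib

open scoped Real Nat

namespace StmtAux17

open Finset Real Nat ArithmeticFunction Complex LSeries
open scoped ArithmeticFunction.Moebius


lemma lemA {N : ℝ} (hN : 2 ≤ N) (n : ℕ) :
    ∑ d ∈ range n, (1:ℝ)/((d:ℝ)+N)^2 ≤ 2/N := by
  have h1 : ∑ d ∈ range n, (1:ℝ)/((d:ℝ)+N)^2 ≤
      ∑ d ∈ range n, ((1:ℝ)/((d:ℝ)+N-1) - 1/((d:ℝ)+N)) := by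
    refine Finset.sum_le_sum fun d _ => ?_
    have hd : (0:ℝ) ≤ d := Nat.cast_nonneg d
    have h2 : (0:ℝ) < (d:ℝ)+N-1 := by linarith
    have h3 : (0:ℝ) < (d:ℝ)+N := by linarith
    rw [div_sub_div _ _ (ne_of_gt h2) (ne_of_gt h3)]
    rw [div_le_div_iff₀ (by positivity) (by positivity)]
    ring_nf
    nlinarith
  have h2 : ∑ d ∈ range n, ((1:ℝ)/((d:ℝ)+N-1) - 1/((d:ℝ)+N))
      = 1/(N-1) - 1/((n:ℝ)+N-1) := by
    have := Finset.sum_range_sub' (f := fun d : ℕ => (1:ℝ)/((d:ℝ)+N-1)) n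
    push_cast at this
    rw [show (1:ℝ)/(N-1) = 1/((0:ℝ)+N-1) by norm_num, ← this]
    apply Finset.sum_congr rfl
    intro d _
    push_cast
    ring_nf
  have h3 : (0:ℝ) < (n:ℝ)+N-1 := by have : (0:ℝ) ≤ n := Nat.cast_nonneg n; linarith
  have h4 : 1/(N-1) ≤ 2/N := by
    rw [div_le_div_iff₀ (by linarith) (by linarith)]; nlinarith
  calc _ ≤ 1/(N-1) - 1/((n:ℝ)+N-1) := h1.trans_eq h2
    _ ≤ 1/(N-1) := by have : (0:ℝ) < 1/((n:ℝ)+N-1) := by positivity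
                      linarith
    _ ≤ 2/N := h4

lemma lemB {N : ℝ} (hN : 2 ≤ N) (n : ℕ) :
    ∑ d ∈ range n, (1:ℝ)/(((d:ℝ)+N)*Real.sqrt ((d:ℝ)+N)) ≤ 3/Real.sqrt N := by
  have h1 : ∑ d ∈ range n, (1:ℝ)/(((d:ℝ)+N)*Real.sqrt ((d:ℝ)+N)) ≤
      ∑ d ∈ range n, ((2:ℝ)/Real.sqrt ((d:ℝ)+N-1) - 2/Real.sqrt ((d:ℝ)+N)) := by
    refine Finset.sum_le_sum fun d _ => ?_
    have hd : (0:ℝ) ≤ d := Nat.cast_nonneg d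
    set a := Real.sqrt ((d:ℝ)+N-1) with ha
    set b := Real.sqrt ((d:ℝ)+N) with hb
    have ha2 : a^2 = (d:ℝ)+N-1 := Real.sq_sqrt (by linarith)
    have hb2 : b^2 = (d:ℝ)+N := Real.sq_sqrt (by linarith)
    have hap : 0 < a := Real.sqrt_pos.mpr (by linarith)
    have hbp : 0 < b := Real.sqrt_pos.mpr (by linarith)
    have hab : a ≤ b := Real.sqrt_le_sqrt (by linarith)
    have hfact : (b-a)*(a+b) = 1 := by nlinarith
    have haux : a*b*(a+b) ≤ 2*b^3 := by nlinarith
    rw [div_sub_div _ _ (ne_of_gt hap) (ne_of_gt hbp), show ((d:ℝ)+N) = b^2 from hb2.symm]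
    rw [div_le_div_iff₀ (by positivity) (by positivity)]
    nlinarith [mul_pos hap hbp]
  have h2 : ∑ d ∈ range n, ((2:ℝ)/Real.sqrt ((d:ℝ)+N-1) - 2/Real.sqrt ((d:ℝ)+N))
      = 2/Real.sqrt (N-1) - 2/Real.sqrt ((n:ℝ)+N-1) := by
    have := Finset.sum_range_sub' (f := fun d : ℕ => (2:ℝ)/Real.sqrt ((d:ℝ)+N-1)) n
    push_cast at this
    rw [show (2:ℝ)/Real.sqrt (N-1) = 2/Real.sqrt ((0:ℝ)+N-1) by norm_num, ← this]
    apply Finset.sum_congr rfl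
    intro d _
    push_cast
    ring_nf
  have h4 : 2/Real.sqrt (N-1) ≤ 3/Real.sqrt N := by
    have hs1 : 0 < Real.sqrt (N-1) := Real.sqrt_pos.mpr (by linarith)
    have hs2 : 0 < Real.sqrt N := Real.sqrt_pos.mpr (by linarith)
    rw [div_le_div_iff₀ hs1 hs2]
    have h9 : 4*N ≤ 9*(N-1) := by linarith
    nlinarith [Real.sq_sqrt (show (0:ℝ) ≤ N-1 by linarith), Real.sq_sqrt (show (0:ℝ) ≤ N by linarith), Real.sqrt_nonneg N, Real.sqrt_nonneg (N-1)]
  calc _ ≤ 2/Real.sqrt (N-1) - 2/Real.sqrt ((n:ℝ)+N-1) := h1.trans_eq h2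
    _ ≤ 2/Real.sqrt (N-1) := by
        have : (0:ℝ) ≤ 2/Real.sqrt ((n:ℝ)+N-1) := by positivity
        linarith
    _ ≤ 3/Real.sqrt N := h4

lemma log_le_two_sqrt {x : ℝ} (hx : 1 ≤ x) : Real.log x ≤ 2 * Real.sqrt x := by
  have h1 : Real.log x = 2 * Real.log (Real.sqrt x) := by
    conv_lhs => rw [← Real.sq_sqrt (show (0:ℝ) ≤ x by linarith)]
    rw [Real.log_pow]; push_cast; ring
  have h2 : Real.log (Real.sqrt x) ≤ Real.sqrt x - 1 :=
    Real.log_le_sub_one_of_pos (Real.sqrt_pos.mpr (by linarith))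
  nlinarith [Real.sqrt_nonneg x]

lemma log_succ_le {m : ℝ} (hm : 0 < m) : Real.log (m+1) - Real.log m ≤ 1/m := by
  rw [← Real.log_div (by linarith) (ne_of_gt hm)]
  have := Real.log_le_sub_one_of_pos (show (0:ℝ) < (m+1)/m by positivity)
  have heq : (m+1)/m - 1 = 1/m := by field_simp; ring
  linarith

lemma harm_asymp {m : ℕ} (hm : 1 ≤ m) :
    |(harmonic m : ℝ) - Real.log m - Real.eulerMascheroniConstant| ≤ 1/m := by
  have h1 := Real.eulerMascheroniSeq_lt_eulerMascheroniConstant m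
  have h2 := Real.eulerMascheroniConstant_lt_eulerMascheroniSeq' m
  rw [Real.eulerMascheroniSeq] at h1
  rw [Real.eulerMascheroniSeq', if_neg (by omega)] at h2
  have hm0 : (0:ℝ) < m := by exact_mod_cast hm
  have h3 := log_succ_le hm0
  rw [abs_le]
  constructor <;> nlinarith [one_div_pos.mpr hm0]

lemma middle (N : ℕ) (hN : 2 ≤ N) :
    |∑ d ∈ Finset.Ico 1 N, ((μ d : ℝ)/(d:ℝ)^2) * (harmonic ((N-1)/d) : ℝ)
      - ∑ d ∈ Finset.Ico 1 N, ((μ d : ℝ)/(d:ℝ)^2) *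
          (Real.log (N-1:ℕ) - Real.log d + Real.eulerMascheroniConstant)|
      ≤ (4/((N-1:ℕ):ℝ)) * (1 + Real.log (N-1:ℕ)) := by
  set n := N - 1 with hn
  have hn1 : 1 ≤ n := by omega
  have hnR : (0:ℝ) < n := by exact_mod_cast hn1
  rw [← Finset.sum_sub_distrib]
  refine (Finset.abs_sum_le_sum_abs _ _).trans ?_
  have hbound : ∀ d ∈ Finset.Ico 1 N,
      |((μ d : ℝ)/(d:ℝ)^2) * (harmonic (n/d) : ℝ)
        - ((μ d : ℝ)/(d:ℝ)^2) * (Real.log n - Real.log d + Real.eulerMascheroniConstant)|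
      ≤ (4/(n:ℝ)) * (1/(d:ℝ)) := by
    intro d hd
    rw [Finset.mem_Ico] at hd
    have hd1 : 1 ≤ d := hd.1
    have hdn : d ≤ n := by omega
    have hdR : (0:ℝ) < d := by exact_mod_cast hd1
    set m := n / d with hm
    have hm1 : 1 ≤ m := (Nat.one_le_div_iff (by omega)).mpr hdn
    have hmR : (0:ℝ) < m := by exact_mod_cast hm1
    -- key real inequalities
    have hmd_le : (m:ℝ) * d ≤ (n:ℝ) := by exact_mod_cast Nat.div_mul_le_self n d
    have hlt : (n:ℝ) < ((m:ℝ)+1) * d := by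
      have := (Nat.div_lt_iff_lt_mul (show 0 < d by omega)).mp (Nat.lt_succ_self m)
      exact_mod_cast this
    have hinv : 1/(m:ℝ) ≤ 2*(d:ℝ)/(n:ℝ) := by
      rw [div_le_div_iff₀ hmR hnR]
      nlinarith [mul_le_mul_of_nonneg_right (show (1:ℝ) ≤ (m:ℝ) by exact_mod_cast hm1) (le_of_lt hdR)]
    -- |log m - (log n - log d)| ≤ 1/m
    have hlog : |Real.log m - (Real.log n - Real.log d)| ≤ 1/(m:ℝ) := by
      have e1 : Real.log m + Real.log d = Real.log ((m:ℝ)*d) :=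
        (Real.log_mul (ne_of_gt hmR) (ne_of_gt hdR)).symm
      have e2 : Real.log ((m:ℝ)*d) ≤ Real.log n :=
        Real.log_le_log (by positivity) hmd_le
      have e3 : Real.log n ≤ Real.log (((m:ℝ)+1)*d) :=
        Real.log_le_log hnR (le_of_lt hlt)
      have e4 : Real.log (((m:ℝ)+1)*d) = Real.log ((m:ℝ)+1) + Real.log d :=
        Real.log_mul (by positivity) (ne_of_gt hdR)
      have e5 := log_succ_le hmR
      rw [abs_le]
      constructor <;> nlinarith
    have hharm := harm_asymp hm1
    have hmu : |(μ d : ℝ)| ≤ 1 := by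
      have := ArithmeticFunction.abs_moebius_le_one (n := d)
      exact_mod_cast this
    rw [← mul_sub, abs_mul]
    have habs : |(harmonic m : ℝ) - (Real.log n - Real.log d + Real.eulerMascheroniConstant)|
        ≤ 2/(m:ℝ) := by
      have : (harmonic m : ℝ) - (Real.log n - Real.log d + Real.eulerMascheroniConstant)
          = ((harmonic m : ℝ) - Real.log m - Real.eulerMascheroniConstant)
            + (Real.log m - (Real.log n - Real.log d)) := by ring
      rw [this]
      refine (abs_add_le _ _).trans ?_
      have h2m : 1/(m:ℝ) + 1/(m:ℝ) = 2/(m:ℝ) := by ring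
      linarith
    have hcoef : |(μ d : ℝ)/(d:ℝ)^2| ≤ 1/(d:ℝ)^2 := by
      rw [abs_div, _root_.abs_of_nonneg (by positivity : (0:ℝ) ≤ (d:ℝ)^2)]
      exact div_le_div_of_nonneg_right hmu (by positivity) |>.trans_eq rfl
    calc |(μ d : ℝ)/(d:ℝ)^2| * |(harmonic m : ℝ) - (Real.log n - Real.log d + Real.eulerMascheroniConstant)|
        ≤ (1/(d:ℝ)^2) * (2/(m:ℝ)) := by
          apply mul_le_mul hcoef habs (abs_nonneg _) (by positivity)
      _ ≤ (1/(d:ℝ)^2) * (2*(2*(d:ℝ)/(n:ℝ))) := by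
          have : 2/(m:ℝ) ≤ 2*(2*(d:ℝ)/(n:ℝ)) := by
            rw [div_eq_mul_one_div 2 (m:ℝ)]
            nlinarith
          exact mul_le_mul_of_nonneg_left this (by positivity)
      _ = (4/(n:ℝ)) * (1/(d:ℝ)) := by field_simp; ring
  refine (Finset.sum_le_sum hbound).trans ?_
  rw [← Finset.mul_sum]
  have hsum : ∑ d ∈ Finset.Ico 1 N, (1:ℝ)/(d:ℝ) = (harmonic n : ℝ) := by
    rw [show N = n + 1 by omega, Finset.Ico_add_one_right_eq_Icc]
    rw [harmonic_eq_sum_Icc]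
    push_cast
    simp [one_div]
  rw [hsum]
  have := harmonic_le_one_add_log n
  apply mul_le_mul_of_nonneg_left this (by positivity)

lemma harm_sum {m : ℕ} : (harmonic m : ℝ) = ∑ e ∈ Finset.Icc 1 m, (1:ℝ)/e := by
  rw [harmonic_eq_sum_Icc]; push_cast; simp [one_div]

lemma tot_inv : ∀ n > 0, ((Nat.totient n : ℝ)) =
    ∑ x ∈ n.divisorsAntidiagonal, (μ x.1 : ℝ) * x.2 := by
  have h := (sum_eq_iff_sum_mul_moebius_eq (R := ℝ)
    (f := fun n => (Nat.totient n : ℝ)) (g := fun n => (n : ℝ))).mp ?_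
  · intro n hn
    exact (h n hn).symm
  · intro n hn
    exact_mod_cast congrArg (Nat.cast : ℕ → ℝ) (Nat.sum_totient n)

lemma step1 (N : ℕ) (hN : 2 ≤ N) :
    ∑ a ∈ Finset.Ico 1 N, (Nat.totient a : ℝ) / (a:ℝ)^2
      = ∑ d ∈ Finset.Ico 1 N, ((μ d : ℝ)/(d:ℝ)^2) * (harmonic ((N-1)/d) : ℝ) := by
  have hterm : ∀ a ∈ Finset.Ico 1 N, (Nat.totient a : ℝ) / (a:ℝ)^2
      = ∑ x ∈ a.divisorsAntidiagonal, (μ x.1 : ℝ)/((x.1:ℝ)^2 * x.2) := by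
    intro a ha
    rw [Finset.mem_Ico] at ha
    rw [tot_inv a ha.1, Finset.sum_div]
    refine Finset.sum_congr rfl fun x hx => ?_
    obtain ⟨hxa, ha0⟩ := Nat.mem_divisorsAntidiagonal.mp hx
    have hx1 : 0 < x.1 :=
      Nat.pos_of_mem_divisors (Nat.fst_mem_divisors_of_mem_antidiagonal hx)
    have hx2 : 0 < x.2 :=
      Nat.pos_of_mem_divisors (Nat.snd_mem_divisors_of_mem_antidiagonal hx)
    have hcast : (a:ℝ) = (x.1:ℝ) * x.2 := by exact_mod_cast hxa.symm
    rw [hcast]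
    have h1 : ((x.1:ℝ)) ≠ 0 := by positivity
    have h2 : ((x.2:ℝ)) ≠ 0 := by positivity
    field_simp
  rw [Finset.sum_congr rfl hterm]
  rw [← Finset.sum_biUnion ?hdisj]
  case hdisj =>
    intro a _ b _ hab
    simp only [Function.onFun, Finset.disjoint_left]
    intro x hxa hxb
    obtain ⟨h1, -⟩ := Nat.mem_divisorsAntidiagonal.mp hxa
    obtain ⟨h2, -⟩ := Nat.mem_divisorsAntidiagonal.mp hxb
    exact hab (h1 ▸ h2)
  rw [Finset.sum_finset_product'
    (s := Finset.Ico 1 N) (t := fun d => Finset.Icc 1 ((N-1)/d))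
    (f := fun d e => (μ d : ℝ)/((d:ℝ)^2 * e))]
  · refine Finset.sum_congr rfl fun d hd => ?_
    rw [Finset.mem_Ico] at hd
    rw [harm_sum, Finset.mul_sum]
    refine Finset.sum_congr rfl fun e _ => ?_
    rw [mul_one_div, div_div]
  · intro p
    simp only [Finset.mem_biUnion, Nat.mem_divisorsAntidiagonal, Finset.mem_Ico,
      Finset.mem_Icc]
    constructor
    · rintro ⟨a, ⟨ha1, ha2⟩, hpa, -⟩
      subst hpa
      have h0 : 0 < p.1 * p.2 := by omega
      have h1 : 0 < p.1 := by
        rcases Nat.eq_zero_or_pos p.1 with h | h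
        · rw [h] at h0; simp at h0
        · exact h
      have h2 : 0 < p.2 := by
        rcases Nat.eq_zero_or_pos p.2 with h | h
        · rw [h] at h0; simp at h0
        · exact h
      refine ⟨⟨h1, ?_⟩, h2, ?_⟩
      · calc p.1 ≤ p.1 * p.2 := Nat.le_mul_of_pos_right _ h2
          _ < N := by omega
      · rw [Nat.le_div_iff_mul_le h1, mul_comm]
        omega
    · rintro ⟨⟨h1, h1'⟩, h2, h2'⟩
      rw [Nat.le_div_iff_mul_le h1, mul_comm] at h2'
      refine ⟨p.1 * p.2, ⟨?_, ?_⟩, rfl, ?_⟩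
      · exact Nat.one_le_iff_ne_zero.mpr (Nat.mul_ne_zero (by omega) (by omega))
      · omega
      · exact Nat.mul_ne_zero (by omega) (by omega)

noncomputable def fP (d : ℕ) : ℝ := (μ d : ℝ) / (d:ℝ)^2
noncomputable def fQ (d : ℕ) : ℝ := (μ d : ℝ) * Real.log d / (d:ℝ)^2

lemma two_re : (2:ℂ).re = 2 := by norm_num

lemma hsummu : LSeriesSummable (fun n => (μ n : ℂ)) 2 :=
  ArithmeticFunction.LSeriesSummable_moebius_iff.mpr (by rw [two_re]; norm_num)

lemma habs2 : abscissaOfAbsConv (fun n => (μ n : ℂ)) < (2:ℂ).re := by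
  rw [ArithmeticFunction.abscissaOfAbsConv_moebius, two_re]
  exact_mod_cast (by norm_num : (1:ℝ) < 2)

lemma hLmu : ∀ s : ℂ, 1 < s.re → LSeries (fun n => (μ n : ℂ)) s = (riemannZeta s)⁻¹ := by
  intro s hs
  have h := LSeries_one_mul_Lseries_moebius (s := s) hs
  rw [LSeries_one_eq_riemannZeta hs] at h
  have hz := riemannZeta_ne_zero_of_one_lt_re hs
  field_simp at h ⊢
  linear_combination h

lemma cpow_nat_two (d : ℕ) : ((d:ℂ))^(2:ℂ) = (((d:ℝ)^2 : ℝ) : ℂ) := by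
  rw [show (2:ℂ) = ((2:ℝ):ℂ) by norm_num, ← Complex.ofReal_natCast,
    ← Complex.ofReal_cpow (Nat.cast_nonneg d)]
  norm_num

lemma term_re (d : ℕ) : (LSeries.term (fun n => (μ n : ℂ)) 2 d).re = fP d := by
  rcases eq_or_ne d 0 with rfl | hd
  · simp [LSeries.term_zero, fP]
  · rw [LSeries.term_of_ne_zero hd, cpow_nat_two]
    have : ((μ d : ℤ) : ℂ) = (((μ d : ℤ) : ℝ) : ℂ) := by push_cast; ring
    rw [this, ← Complex.ofReal_div, Complex.ofReal_re, fP]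

lemma P_val : ∑' d, fP d = 6/π^2 := by
  have h1 : LSeries (fun n => (μ n : ℂ)) 2 = (riemannZeta 2)⁻¹ :=
    hLmu 2 (by rw [two_re]; norm_num)
  have h3 := Complex.reCLM.map_tsum hsummu
  simp only [Complex.reCLM_apply] at h3
  have h2 : (∑' d, fP d) = (LSeries (fun n => (μ n : ℂ)) 2).re := by
    rw [LSeries, h3]
    exact tsum_congr fun d => (term_re d).symm
  rw [h2, h1, riemannZeta_two]
  have h4 : ((π:ℂ)^2/6) = (((π^2/6 : ℝ)) : ℂ) := by push_cast; ring
  rw [h4, ← Complex.ofReal_inv, Complex.ofReal_re, inv_div]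

lemma hsumlog : LSeriesSummable (logMul (fun n => (μ n : ℂ))) 2 :=
  LSeriesSummable_logMul_of_lt_re habs2

lemma termQ_re (d : ℕ) :
    (LSeries.term (logMul (fun n => (μ n : ℂ))) 2 d).re = fQ d := by
  rcases eq_or_ne d 0 with rfl | hd
  · simp [LSeries.term_zero, fQ]
  · rw [LSeries.term_of_ne_zero hd, cpow_nat_two]
    have hlog : Complex.log d = ((Real.log d : ℝ) : ℂ) := by
      rw [← Complex.ofReal_natCast, Complex.ofReal_log (Nat.cast_nonneg d)]
    simp only [logMul]
    rw [hlog]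
    have : ((μ d : ℤ) : ℂ) = (((μ d : ℤ) : ℝ) : ℂ) := by push_cast; ring
    rw [this, ← Complex.ofReal_mul, ← Complex.ofReal_div, Complex.ofReal_re, fQ]
    ring_nf

lemma Q_val : ∑' d, fQ d = (deriv riemannZeta 2).re * (6/π^2)^2 := by
  have hopen : IsOpen {s : ℂ | 1 < s.re} := isOpen_lt continuous_const Complex.continuous_re
  have hmem : {s : ℂ | 1 < s.re} ∈ nhds (2:ℂ) :=
    hopen.mem_nhds (by simp only [Set.mem_setOf_eq, two_re]; norm_num)
  have hEq : deriv (LSeries (fun n => (μ n : ℂ))) 2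
      = deriv (fun s => (riemannZeta s)⁻¹) 2 := by
    apply Filter.EventuallyEq.deriv_eq
    filter_upwards [hmem] with s hs
    exact hLmu s hs
  have hz2 : riemannZeta 2 ≠ 0 := riemannZeta_ne_zero_of_one_lt_re (by rw [two_re]; norm_num)
  have hdz : HasDerivAt riemannZeta (deriv riemannZeta 2) 2 :=
    (differentiableAt_riemannZeta (by norm_num)).hasDerivAt
  have hinv : deriv (fun s => (riemannZeta s)⁻¹) 2
      = -(deriv riemannZeta 2) / (riemannZeta 2)^2 := (hdz.inv hz2).deriv
  have hld : deriv (LSeries (fun n => (μ n : ℂ))) 2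
      = - LSeries (logMul (fun n => (μ n : ℂ))) 2 := LSeries_deriv habs2
  have hQC : LSeries (logMul (fun n => (μ n : ℂ))) 2
      = deriv riemannZeta 2 / (riemannZeta 2)^2 := by
    have := hld.symm.trans (hEq.trans hinv)
    rw [neg_div] at this
    linear_combination -this
  have h3 := Complex.reCLM.map_tsum hsumlog
  simp only [Complex.reCLM_apply] at h3
  have h2 : (∑' d, fQ d) = (LSeries (logMul (fun n => (μ n : ℂ))) 2).re := by
    rw [LSeries, h3]
    exact tsum_congr fun d => (termQ_re d).symm
  rw [h2, hQC, riemannZeta_two]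
  have h4 : ((π:ℂ)^2/6)^2 = ((((π^2/6)^2 : ℝ)) : ℂ) := by push_cast; ring
  rw [h4, div_eq_mul_inv, ← Complex.ofReal_inv]
  rw [Complex.mul_re, Complex.ofReal_re, Complex.ofReal_im]
  have hπ : (π:ℝ) ≠ 0 := Real.pi_ne_zero
  rw [mul_zero, sub_zero]
  congr 1
  field_simp

lemma hsumfP : Summable fP := by
  have h := Summable.map hsummu Complex.reCLM.toAddMonoidHom Complex.reCLM.continuous
  exact h.congr fun d => term_re d

lemma hsumfQ : Summable fQ := by
  have h := Summable.map hsumlog Complex.reCLM.toAddMonoidHom Complex.reCLM.continuous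
  exact h.congr fun d => termQ_re d

lemma mu_abs (d : ℕ) : |(μ d : ℝ)| ≤ 1 := by
  exact_mod_cast (ArithmeticFunction.abs_moebius_le_one (n := d))

lemma fP_abs_le (k : ℕ) : |fP k| ≤ 1/(k:ℝ)^2 := by
  rcases eq_or_ne k 0 with rfl | hk
  · simp [fP]
  · have hkR : (0:ℝ) < k := by exact_mod_cast Nat.pos_of_ne_zero hk
    rw [fP, abs_div, _root_.abs_of_nonneg (by positivity : (0:ℝ) ≤ (k:ℝ)^2)]
    exact div_le_div_of_nonneg_right (mu_abs k) (by positivity)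

lemma fQ_abs_le (k : ℕ) (hk : 1 ≤ k) : |fQ k| ≤ Real.log k/(k:ℝ)^2 := by
  have hkR : (1:ℝ) ≤ k := by exact_mod_cast hk
  have hlog : 0 ≤ Real.log k := Real.log_nonneg hkR
  rw [fQ, abs_div, _root_.abs_of_nonneg (by positivity : (0:ℝ) ≤ (k:ℝ)^2), abs_mul,
    _root_.abs_of_nonneg hlog]
  apply div_le_div_of_nonneg_right _ (by positivity)
  nlinarith [mu_abs k]

lemma fP_tail {N : ℕ} (hN : 2 ≤ N) :
    |(∑' d, fP d) - ∑ d ∈ Finset.range N, fP d| ≤ 2/(N:ℝ) := by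
  have hNR : (2:ℝ) ≤ N := by exact_mod_cast hN
  have key := hsumfP.sum_add_tsum_nat_add N
  have hshift : Summable fun i => fP (i + N) := (summable_nat_add_iff N).mpr hsumfP
  have habs : Summable fun i => |fP (i + N)| := hshift.abs
  have h1 : ∀ i : ℕ, |fP (i+N)| ≤ 1/((i:ℝ)+N)^2 := by
    intro i
    have := fP_abs_le (i+N)
    rwa [Nat.cast_add] at this
  have h2 : (∑' i, |fP (i+N)|) ≤ 2/(N:ℝ) := by
    apply Real.tsum_le_of_sum_range_le (fun i => abs_nonneg _)
    intro n
    exact (Finset.sum_le_sum fun i _ => h1 i).trans (lemA hNR n)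
  have h3 : |∑' i, fP (i+N)| ≤ ∑' i, |fP (i+N)| := by
    have := norm_tsum_le_tsum_norm (f := fun i => fP (i+N))
      (by simpa [Real.norm_eq_abs] using habs)
    simpa [Real.norm_eq_abs] using this
  have heq : (∑' d, fP d) - ∑ d ∈ Finset.range N, fP d = ∑' i, fP (i+N) := by
    linarith [key]
  rw [heq]
  linarith

lemma fQ_tail {N : ℕ} (hN : 2 ≤ N) :
    |(∑' d, fQ d) - ∑ d ∈ Finset.range N, fQ d| ≤ (2*Real.log N + 6)/(N:ℝ) := by
  have hNR : (2:ℝ) ≤ N := by exact_mod_cast hN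
  have hNpos : (0:ℝ) < N := by linarith
  have hsN : 0 < Real.sqrt N := Real.sqrt_pos.mpr hNpos
  have key := hsumfQ.sum_add_tsum_nat_add N
  have hshift : Summable fun i => fQ (i + N) := (summable_nat_add_iff N).mpr hsumfQ
  have habs : Summable fun i => |fQ (i + N)| := hshift.abs
  have h1 : ∀ i : ℕ, |fQ (i+N)| ≤
      Real.log N * (1/((i:ℝ)+N)^2)
        + (2/Real.sqrt N) * (1/(((i:ℝ)+N)*Real.sqrt ((i:ℝ)+N))) := by
    intro i
    set x : ℝ := (i:ℝ)+N with hx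
    have hx2 : (2:ℝ) ≤ x := by
      have : (0:ℝ) ≤ i := Nat.cast_nonneg i
      simp only [hx]; linarith
    have hxpos : 0 < x := by linarith
    have hsx : 0 < Real.sqrt x := Real.sqrt_pos.mpr hxpos
    have hstep : |fQ (i+N)| ≤ Real.log x/x^2 := by
      have := fQ_abs_le (i+N) (by omega)
      rwa [Nat.cast_add] at this
    refine hstep.trans ?_
    have hxx : Real.sqrt x * Real.sqrt x = x := Real.mul_self_sqrt (le_of_lt hxpos)
    have key2 : Real.sqrt x / x^2 = 1/(x*Real.sqrt x) := by
      rw [div_eq_div_iff (by positivity) (by positivity)]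
      nlinarith
    have hlog : Real.log x ≤ Real.log N + 2 * Real.sqrt x / Real.sqrt N := by
      have hdiv : (1:ℝ) ≤ x / N := (one_le_div hNpos).mpr (by simp [hx])
      have h4 := log_le_two_sqrt hdiv
      rw [Real.log_div (by linarith) (ne_of_gt hNpos)] at h4
      rw [Real.sqrt_div (by positivity : (0:ℝ) ≤ x) (N:ℝ)] at h4
      have : 2 * (Real.sqrt x / Real.sqrt N) = 2 * Real.sqrt x / Real.sqrt N := by ring
      linarith [h4, this.le]
    calc Real.log x/x^2 ≤ (Real.log N + 2*Real.sqrt x/Real.sqrt N)/x^2 :=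
          div_le_div_of_nonneg_right hlog (by positivity)
      _ = Real.log N * (1/x^2) + (2/Real.sqrt N)*(Real.sqrt x/x^2) := by ring
      _ = Real.log N * (1/x^2) + (2/Real.sqrt N)*(1/(x*Real.sqrt x)) := by rw [key2]
  have h2 : (∑' i, |fQ (i+N)|) ≤ (2*Real.log N + 6)/(N:ℝ) := by
    apply Real.tsum_le_of_sum_range_le (fun i => abs_nonneg _)
    intro n
    have hA := lemA hNR n
    have hB := lemB hNR n
    have hlogN : 0 ≤ Real.log N := Real.log_nonneg (by linarith)
    calc ∑ i ∈ Finset.range n, |fQ (i+N)|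
        ≤ ∑ i ∈ Finset.range n, (Real.log N * (1/((i:ℝ)+N)^2)
            + (2/Real.sqrt N) * (1/(((i:ℝ)+N)*Real.sqrt ((i:ℝ)+N)))) :=
          Finset.sum_le_sum fun i _ => h1 i
      _ = Real.log N * (∑ i ∈ Finset.range n, 1/((i:ℝ)+N)^2)
            + (2/Real.sqrt N) * (∑ i ∈ Finset.range n, 1/(((i:ℝ)+N)*Real.sqrt ((i:ℝ)+N))) := by
          rw [Finset.sum_add_distrib, Finset.mul_sum, Finset.mul_sum]
      _ ≤ Real.log N * (2/(N:ℝ)) + (2/Real.sqrt N) * (3/Real.sqrt N) := by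
          have t1 := mul_le_mul_of_nonneg_left hA hlogN
          have t2 := mul_le_mul_of_nonneg_left hB (by positivity : (0:ℝ) ≤ 2/Real.sqrt N)
          linarith
      _ = (2*Real.log N + 6)/(N:ℝ) := by
          have hNN : Real.sqrt N * Real.sqrt N = (N:ℝ) := Real.mul_self_sqrt (by linarith)
          field_simp
          nlinarith [hNN]
  have h3 : |∑' i, fQ (i+N)| ≤ ∑' i, |fQ (i+N)| := by
    have := norm_tsum_le_tsum_norm (f := fun i => fQ (i+N))
      (by simpa [Real.norm_eq_abs] using habs)
    simpa [Real.norm_eq_abs] using this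
  have heq : (∑' d, fQ d) - ∑ d ∈ Finset.range N, fQ d = ∑' i, fQ (i+N) := by
    linarith [key]
  rw [heq]
  linarith

lemma range_Ico_P (N : ℕ) (hN : 2 ≤ N) :
    ∑ d ∈ Finset.range N, fP d = ∑ d ∈ Finset.Ico 1 N, fP d := by
  rw [Finset.range_eq_Ico, Finset.sum_eq_sum_Ico_succ_bot (by omega : 0 < N)]
  simp [fP]

lemma range_Ico_Q (N : ℕ) (hN : 2 ≤ N) :
    ∑ d ∈ Finset.range N, fQ d = ∑ d ∈ Finset.Ico 1 N, fQ d := by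
  rw [Finset.range_eq_Ico, Finset.sum_eq_sum_Ico_succ_bot (by omega : 0 < N)]
  simp [fQ]

end StmtAux17

open StmtAux17

set_option maxHeartbeats 2000000 in
/-- `Σ_{a<N} φ(a)/a² = (1/ζ(2))(log N + γ − ζ'(2)/ζ(2)) + O(log N / N)`,
with `ζ(2) = π²/6` and `γ` the Euler–Mascheroni constant. -/
theorem stmt_17 :
    ∃ C : ℝ, 0 < C ∧ ∀ N : ℕ, 2 ≤ N →
      |(∑ a ∈ Finset.Ico 1 N, (φ a : ℝ) / (a : ℝ) ^ 2)
          - 1 / (π ^ 2 / 6) *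
            (Real.log N + Real.eulerMascheroniConstant
              - (deriv riemannZeta 2).re / (π ^ 2 / 6))|
        ≤ C * Real.log N / N := by
  refine ⟨100, by norm_num, fun N hN => ?_⟩
  have hNR : (2:ℝ) ≤ N := by exact_mod_cast hN
  have hNpos : (0:ℝ) < N := by linarith
  have hnR_eq : ((N-1:ℕ):ℝ) = (N:ℝ) - 1 := by
    rw [Nat.cast_sub (by omega)]; norm_num
  have hnRpos : (0:ℝ) < ((N-1:ℕ):ℝ) := by rw [hnR_eq]; linarith
  have hnR1 : (1:ℝ) ≤ ((N-1:ℕ):ℝ) := by rw [hnR_eq]; linarith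
  have hL2 : Real.log 2 ≤ Real.log N := Real.log_le_log (by norm_num) hNR
  have hLhalf : (1:ℝ)/2 ≤ Real.log N := by
    have := Real.log_two_gt_d9
    linarith
  have hLpos : (0:ℝ) < Real.log N := by linarith
  have hlognR : Real.log ((N-1:ℕ):ℝ) ≤ Real.log N :=
    Real.log_le_log hnRpos (by rw [hnR_eq]; linarith)
  have hlognR0 : 0 ≤ Real.log ((N-1:ℕ):ℝ) := Real.log_nonneg hnR1
  have hγ0 : 0 ≤ Real.eulerMascheroniConstant :=
    le_of_lt (by have := Real.one_half_lt_eulerMascheroniConstant; linarith)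
  have hγ1 : Real.eulerMascheroniConstant ≤ 1 :=
    le_of_lt (by have := Real.eulerMascheroniConstant_lt_two_thirds; linarith)
  have h1 := step1 N hN
  have h2 := middle N hN
  have hmid : ∑ d ∈ Finset.Ico 1 N, ((ArithmeticFunction.moebius d : ℝ)/(d:ℝ)^2) *
      (Real.log ((N-1:ℕ):ℝ) - Real.log d + Real.eulerMascheroniConstant)
      = (Real.log ((N-1:ℕ):ℝ) + Real.eulerMascheroniConstant) * (∑ d ∈ Finset.Ico 1 N, fP d)
        - (∑ d ∈ Finset.Ico 1 N, fQ d) := by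
    rw [Finset.mul_sum, ← Finset.sum_sub_distrib]
    refine Finset.sum_congr rfl fun d hd => ?_
    simp only [fP, fQ]
    ring
  have htailP := fP_tail hN
  have htailQ := fQ_tail hN
  rw [range_Ico_P N hN] at htailP
  rw [range_Ico_Q N hN] at htailQ
  rw [P_val] at htailP
  rw [Q_val] at htailQ
  have htarget : 1 / (π ^ 2 / 6) * (Real.log N + Real.eulerMascheroniConstant
        - (deriv riemannZeta 2).re / (π ^ 2 / 6))
      = (6/π^2) * (Real.log N + Real.eulerMascheroniConstant)
        - (deriv riemannZeta 2).re * (6/π^2)^2 := by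
    have hπ : (π:ℝ) ≠ 0 := Real.pi_ne_zero
    field_simp
  have hPabs : |(6:ℝ)/π^2| ≤ 1 := by
    have hπ3 : (3:ℝ) < π := Real.pi_gt_three
    rw [_root_.abs_of_nonneg (by positivity)]
    rw [div_le_one (by positivity)]
    nlinarith
  -- bound each piece
  have hb1 : |(∑ a ∈ Finset.Ico 1 N, (φ a : ℝ) / (a : ℝ) ^ 2)
        - ((Real.log ((N-1:ℕ):ℝ) + Real.eulerMascheroniConstant)
            * (∑ d ∈ Finset.Ico 1 N, fP d) - (∑ d ∈ Finset.Ico 1 N, fQ d))|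
      ≤ (8/(N:ℝ)) * (1 + Real.log N) := by
    rw [h1, ← hmid]
    refine h2.trans ?_
    have hfrac : 4/((N-1:ℕ):ℝ) ≤ 8/(N:ℝ) := by
      rw [div_le_div_iff₀ hnRpos hNpos, hnR_eq]
      nlinarith
    have h1L : (0:ℝ) ≤ 1 + Real.log ((N-1:ℕ):ℝ) := by linarith
    calc (4/((N-1:ℕ):ℝ)) * (1 + Real.log ((N-1:ℕ):ℝ))
        ≤ (8/(N:ℝ)) * (1 + Real.log ((N-1:ℕ):ℝ)) :=
          mul_le_mul_of_nonneg_right hfrac h1L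
      _ ≤ (8/(N:ℝ)) * (1 + Real.log N) := by
          apply mul_le_mul_of_nonneg_left _ (by positivity)
          linarith
  have hb2 : |(Real.log ((N-1:ℕ):ℝ) + Real.eulerMascheroniConstant)
        * ((∑ d ∈ Finset.Ico 1 N, fP d) - 6/π^2)|
      ≤ (Real.log N + 1) * (2/(N:ℝ)) := by
    rw [abs_mul]
    apply mul_le_mul _ _ (abs_nonneg _) (by positivity)
    · rw [_root_.abs_of_nonneg (by linarith)]
      linarith
    · rw [abs_sub_comm]
      exact htailP
  have hb3 : |(∑ d ∈ Finset.Ico 1 N, fQ d)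
        - (deriv riemannZeta 2).re * (6/π^2)^2| ≤ (2*Real.log N + 6)/(N:ℝ) := by
    rw [abs_sub_comm]
    exact htailQ
  have hb4 : |(6/π^2) * (Real.log ((N-1:ℕ):ℝ) - Real.log N)| ≤ 2/(N:ℝ) := by
    rw [abs_mul]
    have hlogdiff : |Real.log ((N-1:ℕ):ℝ) - Real.log N| ≤ 2/(N:ℝ) := by
      rw [abs_of_nonpos (by linarith)]
      have hlq : Real.log N - Real.log ((N-1:ℕ):ℝ) ≤ 1/((N:ℝ)-1) := by
        rw [hnR_eq]
        have := log_succ_le (show (0:ℝ) < (N:ℝ)-1 by linarith)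
        have heq : ((N:ℝ)-1) + 1 = (N:ℝ) := by ring
        rw [heq] at this
        linarith
      have h2N : 1/((N:ℝ)-1) ≤ 2/(N:ℝ) := by
        rw [div_le_div_iff₀ (by linarith) hNpos]
        nlinarith
      rw [hnR_eq]
      rw [hnR_eq] at hlq
      linarith
    calc |(6:ℝ)/π^2| * |Real.log ((N-1:ℕ):ℝ) - Real.log N| ≤ 1 * (2/(N:ℝ)) :=
          mul_le_mul hPabs hlogdiff (abs_nonneg _) (by norm_num)
      _ = 2/(N:ℝ) := by ring
  -- combine
  have hdecomp : (∑ a ∈ Finset.Ico 1 N, (φ a : ℝ) / (a : ℝ) ^ 2)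
      - 1 / (π ^ 2 / 6) * (Real.log N + Real.eulerMascheroniConstant
          - (deriv riemannZeta 2).re / (π ^ 2 / 6))
      = ((∑ a ∈ Finset.Ico 1 N, (φ a : ℝ) / (a : ℝ) ^ 2)
          - ((Real.log ((N-1:ℕ):ℝ) + Real.eulerMascheroniConstant)
              * (∑ d ∈ Finset.Ico 1 N, fP d) - (∑ d ∈ Finset.Ico 1 N, fQ d)))
        + ((Real.log ((N-1:ℕ):ℝ) + Real.eulerMascheroniConstant)
            * ((∑ d ∈ Finset.Ico 1 N, fP d) - 6/π^2))
        - ((∑ d ∈ Finset.Ico 1 N, fQ d) - (deriv riemannZeta 2).re * (6/π^2)^2)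
        + ((6/π^2) * (Real.log ((N-1:ℕ):ℝ) - Real.log N)) := by
    rw [htarget]
    ring
  rw [hdecomp]
  have habs1 := abs_add_le (((∑ a ∈ Finset.Ico 1 N, (φ a : ℝ) / (a : ℝ) ^ 2)
          - ((Real.log ((N-1:ℕ):ℝ) + Real.eulerMascheroniConstant)
              * (∑ d ∈ Finset.Ico 1 N, fP d) - (∑ d ∈ Finset.Ico 1 N, fQ d)))
        + ((Real.log ((N-1:ℕ):ℝ) + Real.eulerMascheroniConstant)
            * ((∑ d ∈ Finset.Ico 1 N, fP d) - 6/π^2))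
        - ((∑ d ∈ Finset.Ico 1 N, fQ d) - (deriv riemannZeta 2).re * (6/π^2)^2))
      ((6/π^2) * (Real.log ((N-1:ℕ):ℝ) - Real.log N))
  have habs2 := abs_sub (((∑ a ∈ Finset.Ico 1 N, (φ a : ℝ) / (a : ℝ) ^ 2)
          - ((Real.log ((N-1:ℕ):ℝ) + Real.eulerMascheroniConstant)
              * (∑ d ∈ Finset.Ico 1 N, fP d) - (∑ d ∈ Finset.Ico 1 N, fQ d)))
        + ((Real.log ((N-1:ℕ):ℝ) + Real.eulerMascheroniConstant)
            * ((∑ d ∈ Finset.Ico 1 N, fP d) - 6/π^2)))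
      ((∑ d ∈ Finset.Ico 1 N, fQ d) - (deriv riemannZeta 2).re * (6/π^2)^2)
  have habs3 := abs_add_le ((∑ a ∈ Finset.Ico 1 N, (φ a : ℝ) / (a : ℝ) ^ 2)
          - ((Real.log ((N-1:ℕ):ℝ) + Real.eulerMascheroniConstant)
              * (∑ d ∈ Finset.Ico 1 N, fP d) - (∑ d ∈ Finset.Ico 1 N, fQ d)))
        ((Real.log ((N-1:ℕ):ℝ) + Real.eulerMascheroniConstant)
            * ((∑ d ∈ Finset.Ico 1 N, fP d) - 6/π^2))
  have hfinal : (8/(N:ℝ))*(1+Real.log N) + (Real.log N+1)*(2/(N:ℝ))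
      + (2*Real.log N+6)/(N:ℝ) + 2/(N:ℝ) ≤ 100 * Real.log N / N := by
    have heq : (8/(N:ℝ))*(1+Real.log N) + (Real.log N+1)*(2/(N:ℝ))
        + (2*Real.log N+6)/(N:ℝ) + 2/(N:ℝ)
        = (12*Real.log N + 18)/(N:ℝ) := by
      field_simp
      ring
    rw [heq, show (100:ℝ) * Real.log N / N = (100*Real.log N)/N by ring,
      div_le_div_iff₀ hNpos hNpos]
    nlinarith
  linarith
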